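/- arXiv:0908.1808 — 5 statements merged into one kernel-verified Lean document; each statement's English description precedes it below -/
import Mathlib

section
/- Let G be a nilpotent group, let w and γ be elements of G, and let H₂ be the normal closure of w in G. Then the normal closure of the single element w·[w, γwγ⁻¹] in G equals the normal closure of w in G. (Here [x,y] = xyx⁻¹y⁻¹.) -/
open scoped commutatorElement

theorem stmt_1 {G : Type*} [Group G] [Group.IsNilpotent G] (w γ : G) :
    Subgroup.normalClosure {w * ⁅w, γ * w * γ⁻¹⁆} = Subgroup.normalClosure {w} := by
  apply le_antisymm
  · apply Subgroup.normalClosure_le_normal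
    intro x hx
    rcases hx with rfl
    have hw : w ∈ Subgroup.normalClosure {w} :=
      Subgroup.subset_normalClosure rfl
    have hc : γ * w * γ⁻¹ ∈ Subgroup.normalClosure {w} := by
      simpa [mul_assoc] using
        (Subgroup.normalClosure_normal (s := ({w} : Set G))).conj_mem w hw γ
    exact mul_mem hw (commutatorElement_def w (γ * w * γ⁻¹) ▸
      mul_mem (mul_mem (mul_mem hw hc) (inv_mem hw)) (inv_mem hc))
  · set K := Subgroup.normalClosure {w * ⁅w, γ * w * γ⁻¹⁆} with hK
    apply Subgroup.normalClosure_le_normal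
    rw [Set.singleton_subset_iff]
    show w ∈ K
    -- work in the quotient Q = G / K
    let Q := G ⧸ K
    let π : G →* Q := QuotientGroup.mk' K
    have hu : π (w * ⁅w, γ * w * γ⁻¹⁆) = 1 := by
      rw [QuotientGroup.mk'_apply, QuotientGroup.eq_one_iff]
      exact Subgroup.subset_normalClosure rfl
    have hu' : π w * ⁅π w, π γ * π w * (π γ)⁻¹⁆ = 1 := by
      simpa [map_mul, map_commutatorElement] using hu
    set M : Subgroup Q := Subgroup.normalClosure {π w} with hM
    have hwM : π w ∈ M := Subgroup.subset_normalClosure rfl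
    have hcM : π γ * π w * (π γ)⁻¹ ∈ M := by
      simpa [mul_assoc] using
        (Subgroup.normalClosure_normal (s := ({π w} : Set Q))).conj_mem (π w) hwM (π γ)
    have hMcomm : M ≤ ⁅M, M⁆ := by
      have hwin : π w ∈ ⁅M, M⁆ := by
        have h1 : ⁅π w, π γ * π w * (π γ)⁻¹⁆ ∈ ⁅M, M⁆ :=
          Subgroup.commutator_mem_commutator hwM hcM
        have : π w = (⁅π w, π γ * π w * (π γ)⁻¹⁆)⁻¹ := by
          rw [eq_inv_iff_mul_eq_one]; exact hu'
        rw [this]; exact inv_mem h1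
      exact Subgroup.normalClosure_le_normal (by simpa using hwin)
    have hlcs : ∀ n, M ≤ (⊤ : Subgroup Q).lowerCentralSeries n := by
      intro n
      induction n with
      | zero => exact le_top
      | succ n ih =>
        calc M ≤ ⁅M, M⁆ := hMcomm
        _ ≤ ⁅(⊤ : Subgroup Q).lowerCentralSeries n, (⊤ : Subgroup Q)⁆ :=
            Subgroup.commutator_mono ih le_top
        _ = (⊤ : Subgroup Q).lowerCentralSeries (n + 1) := (Subgroup.lowerCentralSeries_succ ⊤ n).symm
    obtain ⟨n, hn⟩ := Subgroup.nilpotent_iff_lowerCentralSeries.mp (inferInstance : Group.IsNilpotent Q)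
    have : π w = 1 := by
      have := hlcs n hwM
      rw [hn] at this
      simpa using this
    rw [QuotientGroup.mk'_apply, QuotientGroup.eq_one_iff] at this
    exact this
end

section
/- Let G and H be groups with G finitely generated and nilpotent, and suppose φ : G → H and ψ : H → G are surjective group homomorphisms. Then φ is an isomorphism. -/
open Subgroup
open scoped commutatorElement

/-- A surjective homomorphism maps each term of the lower central series onto
the corresponding term. -/
lemma lcs_map_eq {G H : Type*} [Group G] [Group H] (f : G →* H)
    (hf : Function.Surjective f) (n : ℕ) :
    (Subgroup.lowerCentralSeries (⊤ : Subgroup G) n).map f = Subgroup.lowerCentralSeries (⊤ : Subgroup H) n := by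
  induction n with
  | zero =>
      simp only [Subgroup.lowerCentralSeries_zero]
      rwa [← MonoidHom.range_eq_map, MonoidHom.range_eq_top]
  | succ n ih =>
      show Subgroup.map f ⁅Subgroup.lowerCentralSeries (⊤ : Subgroup G) n, (⊤ : Subgroup G)⁆ = _
      rw [Subgroup.map_commutator, ih]
      congr 1
      rwa [← MonoidHom.range_eq_map, MonoidHom.range_eq_top]

/-- For a finitely generated group, each term of the lower central series is
finitely generated modulo the next term. -/
lemma lcs_fg_mod_next {G : Type*} [Group G] (S : Set G) (hfin : S.Finite)
    (hS : closure S = ⊤) (i : ℕ) :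
    ∃ T : Set G, T.Finite ∧ T ⊆ Subgroup.lowerCentralSeries (⊤ : Subgroup G) i ∧
      Subgroup.lowerCentralSeries (⊤ : Subgroup G) i = closure T ⊔ Subgroup.lowerCentralSeries (⊤ : Subgroup G) (i + 1) := by
  induction i with
  | zero =>
      refine ⟨S, hfin, fun x _ => Subgroup.mem_top x, ?_⟩
      rw [Subgroup.lowerCentralSeries_zero]
      exact le_antisymm (hS ▸ le_sup_left) le_top
  | succ i ih =>
      obtain ⟨T, hTfin, hTsub, hTeq⟩ := ih
      refine ⟨(fun p : G × G => ⁅p.1, p.2⁆) '' (T ×ˢ S),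
        (hTfin.prod hfin).image _, ?_, ?_⟩
      · rintro x ⟨⟨t, s⟩, ⟨ht, _⟩, rfl⟩
        exact commutator_mem_commutator (hTsub ht) (Subgroup.mem_top s)
      · set T' : Set G := (fun p : G × G => ⁅p.1, p.2⁆) '' (T ×ˢ S) with hT'
        set M : Subgroup G := closure T' ⊔ Subgroup.lowerCentralSeries (⊤ : Subgroup G) (i + 2) with hM
        have hT'sub : T' ⊆ Subgroup.lowerCentralSeries (⊤ : Subgroup G) (i + 1) := by
          rintro x ⟨⟨t, s⟩, ⟨ht, _⟩, rfl⟩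
          exact commutator_mem_commutator (hTsub ht) (Subgroup.mem_top s)
        have hM1 : M ≤ Subgroup.lowerCentralSeries (⊤ : Subgroup G) (i + 1) :=
          sup_le ((closure_le _).mpr hT'sub)
            (Subgroup.lowerCentralSeries_antitone ⊤ (Nat.le_succ _))
        have hMnormal : M.Normal := by
          constructor
          intro h hh g
          have hcomm : ⁅g, h⁆ ∈ Subgroup.lowerCentralSeries (⊤ : Subgroup G) (i + 2) := by
            have : ⁅g, h⁆ ∈ ⁅(⊤ : Subgroup G), Subgroup.lowerCentralSeries (⊤ : Subgroup G) (i + 1)⁆ :=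
              commutator_mem_commutator (Subgroup.mem_top g) (hM1 hh)
            rwa [Subgroup.commutator_comm] at this
          have : g * h * g⁻¹ = ⁅g, h⁆ * h := by group
          rw [this]
          exact M.mul_mem ((le_sup_right : Subgroup.lowerCentralSeries (⊤ : Subgroup G) (i + 2) ≤ M) hcomm) hh
        -- work in the quotient G ⧸ M
        letI := hMnormal
        set π := QuotientGroup.mk' M with hπ
        have hπsurj : Function.Surjective π := QuotientGroup.mk'_surjective M
        have hMker : (M : Subgroup G) = π.ker := (QuotientGroup.ker_mk' M).symm
        have hkill : ∀ x ∈ M, π x = 1 := by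
          intro x hx
          rw [← MonoidHom.mem_ker, ← hMker]; exact hx
        -- the image of γ_{i+1} is central in G ⧸ M
        have hZ : (Subgroup.lowerCentralSeries (⊤ : Subgroup G) (i + 1)).map π ≤ center (G ⧸ M) := by
          intro z hz
          rw [Subgroup.mem_center_iff]
          intro g
          obtain ⟨g, rfl⟩ := hπsurj g
          have : ⁅z, π g⁆ ∈ (Subgroup.lowerCentralSeries (⊤ : Subgroup G) (i + 2)).map π := by
            have : ⁅z, π g⁆ ∈
                ⁅(Subgroup.lowerCentralSeries (⊤ : Subgroup G) (i + 1)).map π, Subgroup.map π ⊤⁆ :=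
              commutator_mem_commutator hz (Subgroup.mem_map_of_mem π (Subgroup.mem_top g))
            rwa [← Subgroup.map_commutator] at this
          have hbot : (Subgroup.lowerCentralSeries (⊤ : Subgroup G) (i + 2)).map π = ⊥ := by
            rw [Subgroup.map_eq_bot_iff, ← hMker]
            exact le_sup_right
          rw [hbot, Subgroup.mem_bot, commutatorElement_eq_one_iff_commute] at this
          exact this.symm.eq
        -- the image of T is central in G ⧸ M
        have hTcent : ∀ t ∈ T, π t ∈ center (G ⧸ M) := by
          intro t ht
          rw [Subgroup.mem_center_iff]
          have htop : closure (π '' S) = (⊤ : Subgroup (G ⧸ M)) := by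
            rw [← MonoidHom.map_closure, hS, ← MonoidHom.range_eq_map,
              MonoidHom.range_eq_top]
            exact hπsurj
          have hcent : (⊤ : Subgroup (G ⧸ M)) ≤ centralizer {π t} := by
            rw [← htop]
            apply (closure_le _).mpr
            rintro x ⟨s, hs, rfl⟩
            rw [SetLike.mem_coe, Subgroup.mem_centralizer_iff]
            rintro y ⟨rfl⟩
            have : π ⁅t, s⁆ = 1 := hkill _ ((le_sup_left : closure T' ≤ M)
              (subset_closure ⟨(t, s), ⟨ht, hs⟩, rfl⟩))
            rw [map_commutatorElement, commutatorElement_eq_one_iff_commute] at this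
            exact this.eq
          intro g
          have := hcent (Subgroup.mem_top g)
          rw [Subgroup.mem_centralizer_iff] at this
          exact (this (π t) rfl).symm
        -- hence γ_i maps into the center, so γ_{i+1} maps to ⊥
        have hγi : (Subgroup.lowerCentralSeries (⊤ : Subgroup G) i).map π ≤ center (G ⧸ M) := by
          rw [hTeq, Subgroup.map_sup, MonoidHom.map_closure]
          refine sup_le ?_ hZ
          apply (closure_le _).mpr
          rintro x ⟨t, ht, rfl⟩
          exact hTcent t ht
        have hγi1 : (Subgroup.lowerCentralSeries (⊤ : Subgroup G) (i + 1)).map π = ⊥ := by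
          show Subgroup.map π ⁅Subgroup.lowerCentralSeries (⊤ : Subgroup G) i, (⊤ : Subgroup G)⁆ = ⊥
          rw [Subgroup.map_commutator, eq_bot_iff, Subgroup.commutator_le]
          intro g₁ h₁ g₂ _
          rw [Subgroup.mem_bot, commutatorElement_eq_one_iff_commute]
          have := hγi h₁
          rw [Subgroup.mem_center_iff] at this
          exact (this g₂).symm
        rw [Subgroup.map_eq_bot_iff, ← hMker] at hγi1
        exact le_antisymm hγi1 (sup_le ((closure_le _).mpr hT'sub)
          (Subgroup.lowerCentralSeries_antitone ⊤ (Nat.le_succ _)))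

/-- A finitely generated commutative group is Hopfian. -/
lemma comm_fg_hopfian {A : Type*} [Group A] [Group.FG A]
    (hc : ∀ a b : A, a * b = b * a) (f : A →* A)
    (hf : Function.Surjective f) : Function.Injective f := by
  letI : CommGroup A := { ‹Group A› with mul_comm := hc }
  haveI : AddGroup.FG (Additive A) := GroupFG.iff_add_fg.mp ‹Group.FG A›
  haveI : Module.Finite ℤ (Additive A) := Module.Finite.iff_addGroup_fg.mpr ‹_›
  let g : Additive A →ₗ[ℤ] Additive A := (MonoidHom.toAdditive f).toIntLinearMap
  have hginj : Function.Injective g :=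
    IsNoetherian.injective_of_surjective_endomorphism g hf
  exact hginj

/-- Finitely generated groups with lower central series terminating at `⊥` are Hopfian. -/
lemma fg_nilpotent_hopfian : ∀ (c : ℕ) (G : Type*) [Group G] [Group.FG G],
    Subgroup.lowerCentralSeries (⊤ : Subgroup G) c = ⊥ → ∀ f : G →* G,
      Function.Surjective f → Function.Injective f := by
  intro c
  induction c with
  | zero =>
      intro G _ _ h f _
      have htriv : ∀ x : G, x = 1 := by
        intro x
        have : x ∈ Subgroup.lowerCentralSeries (⊤ : Subgroup G) 0 := Subgroup.mem_top x
        rw [h, Subgroup.mem_bot] at this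
        exact this
      intro a b _
      rw [htriv a, htriv b]
  | succ c ih =>
      intro G _ _ hc f hf
      set N := Subgroup.lowerCentralSeries (⊤ : Subgroup G) c with hN
      letI : N.Normal := Subgroup.lowerCentralSeries_normal ⊤ c
      set π := QuotientGroup.mk' N with hπ
      have hπsurj : Function.Surjective π := QuotientGroup.mk'_surjective N
      haveI : Group.FG (G ⧸ N) := Group.fg_of_surjective hπsurj
      -- the quotient has smaller class
      have hQ : Subgroup.lowerCentralSeries (⊤ : Subgroup (G ⧸ N)) c = ⊥ := by
        rw [← lcs_map_eq π hπsurj c, Subgroup.map_eq_bot_iff, QuotientGroup.ker_mk']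
      -- f preserves N
      have hfN : (N : Subgroup G).map f = N := lcs_map_eq f hf c
      have hfmem : ∀ x ∈ N, f x ∈ N := fun x hx =>
        hfN ▸ Subgroup.mem_map_of_mem f hx
      -- induced map on the quotient
      let fbar : G ⧸ N →* G ⧸ N :=
        QuotientGroup.map N N f (fun x hx => hfmem x hx)
      have hfbarsurj : Function.Surjective fbar := by
        intro y
        obtain ⟨x, rfl⟩ := hπsurj y
        obtain ⟨z, rfl⟩ := hf x
        exact ⟨π z, rfl⟩
      have hfbarinj : Function.Injective fbar := ih (G ⧸ N) hQ fbar hfbarsurj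
      -- kernel of f lies in N
      have hker : ∀ x : G, f x = 1 → x ∈ N := by
        intro x hx
        have : fbar (π x) = 1 := by
          show π (f x) = 1
          rw [hx, map_one]
        have h1 : fbar (π x) = fbar 1 := by rw [this, map_one]
        have := hfbarinj h1
        rwa [← QuotientGroup.eq_one_iff x]
      -- N is central, hence commutative
      have hcen : ∀ x ∈ N, ∀ g : G, x * g = g * x := by
        intro x hx g
        have : ⁅x, g⁆ ∈ Subgroup.lowerCentralSeries (⊤ : Subgroup G) (c + 1) :=
          commutator_mem_commutator hx (Subgroup.mem_top g)
        rw [hc, Subgroup.mem_bot, commutatorElement_eq_one_iff_commute] at this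
        exact this.eq
      -- N is finitely generated
      obtain ⟨S, hScl, hSfin⟩ := (Group.fg_iff).mp ‹Group.FG G›
      obtain ⟨T, hTfin, _, hTeq⟩ := lcs_fg_mod_next S hSfin hScl c
      have hNfg : N.FG := by
        rw [Subgroup.fg_iff]
        refine ⟨T, ?_, hTfin⟩
        rw [hN, hTeq, hc, sup_bot_eq]
      haveI : Group.FG ↥N := (Group.fg_iff_subgroup_fg N).mpr hNfg
      -- f restricts to a surjective endomorphism of N
      let fN : ↥N →* ↥N := (f.domRestrict N).codRestrict N (fun x => hfmem x x.2)
      have hfNsurj : Function.Surjective fN := by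
        rintro ⟨y, hy⟩
        rw [← hfN] at hy
        obtain ⟨x, hx, hfx⟩ := hy
        exact ⟨⟨x, hx⟩, Subtype.ext hfx⟩
      have hfNinj : Function.Injective fN :=
        comm_fg_hopfian (fun a b => Subtype.ext (hcen a.1 a.2 b.1)) fN hfNsurj
      -- conclude
      intro a b hab
      have h1 : f (a * b⁻¹) = 1 := by
        rw [map_mul, map_inv, hab, mul_inv_cancel]
      have hmem : a * b⁻¹ ∈ N := hker _ h1
      have h2 : fN ⟨a * b⁻¹, hmem⟩ = fN 1 := by
        rw [map_one]
        exact Subtype.ext h1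
      have := hfNinj h2
      have : a * b⁻¹ = 1 := congrArg Subtype.val this
      rwa [mul_inv_eq_one] at this

theorem stmt_2 {G H : Type*} [Group G] [Group H] [Group.FG G] [Group.IsNilpotent G]
    (φ : G →* H) (ψ : H →* G)
    (hφ : Function.Surjective φ) (hψ : Function.Surjective ψ) :
    Function.Bijective φ := by
  obtain ⟨c, hc⟩ := Subgroup.nilpotent_iff_lowerCentralSeries.mp ‹Group.IsNilpotent G›
  have hcomp : Function.Injective (ψ.comp φ) :=
    fg_nilpotent_hopfian c G hc (ψ.comp φ) (hψ.comp hφ)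
  exact ⟨fun a b hab => hcomp (by simp [MonoidHom.comp_apply, hab]), hφ⟩
end

section
/- Let G be a residually nilpotent group, let H be a group, and let ψ : G → H be a surjective homomorphism with nontrivial kernel such that G/γ_i(G) is isomorphic to H/γ_i(H) for all i and these quotients are finitely generated nilpotent. Then a contradiction follows; i.e., no such ψ exists. Equivalently: if G is residually nilpotent, H is a quotient of G by a nontrivial normal subgroup, and all lower central quotients of G and H are isomorphic finitely generated groups, this is impossible. -/
open Subgroup
open scoped commutatorElement

private lemma lcs_map_surj {G H : Type*} [Group G] [Group H] (f : G →* H)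
    (hf : Function.Surjective f) (n : ℕ) :
    ((⊤ : Subgroup G).lowerCentralSeries n).map f = (⊤ : Subgroup H).lowerCentralSeries n := by
  induction n with
  | zero => exact Subgroup.map_top_of_surjective f hf
  | succ n ih =>
    show Subgroup.map f ⁅(⊤ : Subgroup G).lowerCentralSeries n, ⊤⁆ = ⁅(⊤ : Subgroup H).lowerCentralSeries n, ⊤⁆
    rw [Subgroup.map_commutator, ih, Subgroup.map_top_of_surjective f hf]

private lemma step_lemma {Q : Type*} [Group Q] (n : ℕ)
    (hb : (⊤ : Subgroup Q).lowerCentralSeries (n + 2) = ⊥) {T S : Set Q}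
    (hTsub : T ⊆ ((⊤ : Subgroup Q).lowerCentralSeries n : Set Q))
    (hT : Subgroup.closure T ⊔ (⊤ : Subgroup Q).lowerCentralSeries (n + 1) = (⊤ : Subgroup Q).lowerCentralSeries n)
    (hS : Subgroup.closure S = ⊤) :
    (⊤ : Subgroup Q).lowerCentralSeries (n + 1) ≤ Subgroup.closure {z | ∃ t ∈ T, ∃ s ∈ S, z = ⁅t, s⁆} := by
  set M := Subgroup.closure {z | ∃ t ∈ T, ∃ s ∈ S, z = ⁅t, s⁆} with hM
  have hcent : ∀ y ∈ (⊤ : Subgroup Q).lowerCentralSeries (n + 1), ∀ z : Q, y * z = z * y := by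
    intro y hy z
    have h1 : ⁅y, z⁆ ∈ (⊤ : Subgroup Q).lowerCentralSeries (n + 2) :=
      commutator_mem_commutator hy (mem_top z)
    rw [hb] at h1
    exact commutatorElement_eq_one_iff_mul_comm.mp (Subgroup.mem_bot.mp h1)
  have hYc : ∀ y ∈ (⊤ : Subgroup Q).lowerCentralSeries n, ∀ g : Q,
      ⁅y, g⁆ ∈ (⊤ : Subgroup Q).lowerCentralSeries (n + 1) := fun y hy g =>
    commutator_mem_commutator hy (mem_top g)
  have claim1 : ∀ t ∈ T, ∀ g : Q, ⁅t, g⁆ ∈ M := by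
    intro t ht g
    have htn : t ∈ (⊤ : Subgroup Q).lowerCentralSeries n := hTsub ht
    have hg : g ∈ Subgroup.closure S := by rw [hS]; exact mem_top g
    refine closure_induction (p := fun g _ => ⁅t, g⁆ ∈ M) ?_ ?_ ?_ ?_ hg
    · intro s hs; exact subset_closure ⟨t, ht, s, hs, rfl⟩
    · show ⁅t, (1 : Q)⁆ ∈ M
      rw [commutatorElement_one_right]; exact M.one_mem
    · intro g₁ g₂ _ _ h1 h2
      show ⁅t, g₁ * g₂⁆ ∈ M
      have hc := hcent _ (hYc t htn g₂)
      have e : ⁅t, g₁ * g₂⁆ = ⁅t, g₁⁆ * (g₁ * ⁅t, g₂⁆ * g₁⁻¹) := by group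
      have conj : g₁ * ⁅t, g₂⁆ * g₁⁻¹ = ⁅t, g₂⁆ := by rw [← hc g₁]; group
      rw [e, conj]
      exact M.mul_mem h1 h2
    · intro g _ h1
      show ⁅t, g⁻¹⁆ ∈ M
      have hc := hcent _ (hYc t htn g)
      have e : ⁅t, g⁻¹⁆ = g⁻¹ * ⁅t, g⁆⁻¹ * g := by group
      have h2 := hcent _ (((⊤ : Subgroup Q).lowerCentralSeries (n + 1)).inv_mem (hYc t htn g)) g
      have conj : g⁻¹ * ⁅t, g⁆⁻¹ * g = ⁅t, g⁆⁻¹ := by rw [mul_assoc, h2]; group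
      rw [e, conj]
      exact M.inv_mem h1
  have claim2 : ∀ y ∈ (⊤ : Subgroup Q).lowerCentralSeries n, ∀ g : Q, ⁅y, g⁆ ∈ M := by
    intro y hy g
    have hy' : y ∈ Subgroup.closure (T ∪ ((⊤ : Subgroup Q).lowerCentralSeries (n + 1) : Set Q)) := by
      rw [Subgroup.closure_union, Subgroup.closure_eq, hT]; exact hy
    refine (closure_induction
      (p := fun y _ => y ∈ (⊤ : Subgroup Q).lowerCentralSeries n ∧ ∀ g : Q, ⁅y, g⁆ ∈ M)
      ?_ ?_ ?_ ?_ hy').2 g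
    · rintro z (hz | hz)
      · exact ⟨hTsub hz, claim1 z hz⟩
      · show z ∈ (⊤ : Subgroup Q).lowerCentralSeries n ∧ ∀ g : Q, ⁅z, g⁆ ∈ M
        refine ⟨Subgroup.lowerCentralSeries_antitone _ (Nat.le_succ n) hz, fun g => ?_⟩
        have h1 : ⁅z, g⁆ = 1 := commutatorElement_eq_one_iff_mul_comm.mpr (hcent z hz g)
        rw [h1]; exact M.one_mem
    · exact ⟨((⊤ : Subgroup Q).lowerCentralSeries n).one_mem,
        fun g => by rw [commutatorElement_one_left]; exact M.one_mem⟩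
    · rintro a b _ _ ⟨ha, hfa⟩ ⟨hb', hfb⟩
      show a * b ∈ (⊤ : Subgroup Q).lowerCentralSeries n ∧ ∀ g : Q, ⁅a * b, g⁆ ∈ M
      refine ⟨mul_mem ha hb', fun g => ?_⟩
      have hc := hcent _ (hYc b hb' g)
      have e : ⁅a * b, g⁆ = (a * ⁅b, g⁆ * a⁻¹) * ⁅a, g⁆ := by group
      have conj : a * ⁅b, g⁆ * a⁻¹ = ⁅b, g⁆ := by rw [← hc a]; group
      rw [e, conj]
      exact M.mul_mem (hfb g) (hfa g)
    · rintro a _ ⟨ha, hfa⟩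
      show a⁻¹ ∈ (⊤ : Subgroup Q).lowerCentralSeries n ∧ ∀ g : Q, ⁅a⁻¹, g⁆ ∈ M
      refine ⟨inv_mem ha, fun g => ?_⟩
      have h2 := hcent _ (((⊤ : Subgroup Q).lowerCentralSeries (n + 1)).inv_mem (hYc a ha g)) a
      have e : ⁅a⁻¹, g⁆ = a⁻¹ * ⁅a, g⁆⁻¹ * a := by group
      have conj : a⁻¹ * ⁅a, g⁆⁻¹ * a = ⁅a, g⁆⁻¹ := by rw [mul_assoc, h2]; group
      rw [e, conj]
      exact M.inv_mem (hfa g)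
  show ⁅(⊤ : Subgroup Q).lowerCentralSeries n, (⊤ : Subgroup Q)⁆ ≤ M
  exact Subgroup.commutator_le.mpr fun y hy g _ => claim2 y hy g

private lemma fgsec (K : Type*) [Group K] [Group.FG K] (n : ℕ) :
    ∃ T : Set K, T.Finite ∧ T ⊆ ((⊤ : Subgroup K).lowerCentralSeries n : Set K) ∧
      Subgroup.closure T ⊔ (⊤ : Subgroup K).lowerCentralSeries (n + 1) = (⊤ : Subgroup K).lowerCentralSeries n := by
  induction n with
  | zero =>
    obtain ⟨S, hS, hfin⟩ := Group.fg_iff.mp ‹_›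
    exact ⟨S, hfin, fun x _ => mem_top x, by rw [hS]; simp⟩
  | succ n ih =>
    obtain ⟨T, hTfin, hTsub, hT⟩ := ih
    obtain ⟨S, hS, hSfin⟩ := Group.fg_iff.mp ‹_›
    set N := (⊤ : Subgroup K).lowerCentralSeries (n + 2) with hNdef
    let p : K →* K ⧸ N := QuotientGroup.mk' N
    have hpsurj := QuotientGroup.mk'_surjective N
    have hmap : ∀ m, ((⊤ : Subgroup K).lowerCentralSeries m).map p = (⊤ : Subgroup (K ⧸ N)).lowerCentralSeries m :=
      lcs_map_surj p hpsurj
    have hb : (⊤ : Subgroup (K ⧸ N)).lowerCentralSeries (n + 2) = ⊥ := by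
      rw [← hmap]; exact QuotientGroup.map_mk'_self (N := N)
    refine ⟨{z | ∃ t ∈ T, ∃ s ∈ S, z = ⁅t, s⁆}, ?_, ?_, ?_⟩
    · have hZ : {z : K | ∃ t ∈ T, ∃ s ∈ S, z = ⁅t, s⁆} =
          (fun q : K × K => ⁅q.1, q.2⁆) '' (T ×ˢ S) := by
        ext z
        constructor
        · rintro ⟨t, ht, s, hs, rfl⟩; exact ⟨(t, s), ⟨ht, hs⟩, rfl⟩
        · rintro ⟨⟨t, s⟩, ⟨ht, hs⟩, rfl⟩; exact ⟨t, ht, s, hs, rfl⟩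
      rw [hZ]
      exact (hTfin.prod hSfin).image _
    · rintro z ⟨t, ht, s, hs, rfl⟩
      exact commutator_mem_commutator (hTsub ht) (mem_top s)
    · refine le_antisymm (sup_le ((Subgroup.closure_le _).mpr ?_)
        (Subgroup.lowerCentralSeries_antitone _ (Nat.le_succ _))) ?_
      · rintro z ⟨t, ht, s, hs, rfl⟩
        exact commutator_mem_commutator (hTsub ht) (mem_top s)
      · intro x hx
        have hT' : Subgroup.closure (p '' T) ⊔ (⊤ : Subgroup (K ⧸ N)).lowerCentralSeries (n + 1) =
            (⊤ : Subgroup (K ⧸ N)).lowerCentralSeries n := by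
          rw [← MonoidHom.map_closure, ← hmap (n + 1), ← hmap n, ← Subgroup.map_sup, hT]
        have hS' : Subgroup.closure (p '' S) = ⊤ := by
          rw [← MonoidHom.map_closure, hS]
          exact Subgroup.map_top_of_surjective p hpsurj
        have hTsub' : (p '' T : Set (K ⧸ N)) ⊆ ((⊤ : Subgroup (K ⧸ N)).lowerCentralSeries n : Set (K ⧸ N)) := by
          rintro _ ⟨t, ht, rfl⟩
          rw [← hmap n]
          exact Subgroup.mem_map_of_mem p (hTsub ht)
        have hstep := step_lemma n hb hTsub' hT' hS'
        have hpx : p x ∈ (⊤ : Subgroup (K ⧸ N)).lowerCentralSeries (n + 1) := by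
          rw [← hmap (n + 1)]
          exact Subgroup.mem_map_of_mem p hx
        have hsets : {z : K ⧸ N | ∃ t ∈ p '' T, ∃ s ∈ p '' S, z = ⁅t, s⁆} =
            p '' {z : K | ∃ t ∈ T, ∃ s ∈ S, z = ⁅t, s⁆} := by
          ext z
          constructor
          · rintro ⟨_, ⟨t, ht, rfl⟩, _, ⟨s, hs, rfl⟩, rfl⟩
            exact ⟨⁅t, s⁆, ⟨t, ht, s, hs, rfl⟩, map_commutatorElement p t s⟩
          · rintro ⟨_, ⟨t, ht, s, hs, rfl⟩, rfl⟩
            exact ⟨p t, ⟨t, ht, rfl⟩, p s, ⟨s, hs, rfl⟩, (map_commutatorElement p t s).symm⟩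
        rw [hsets, ← MonoidHom.map_closure] at hstep
        have hmem : x ∈ Subgroup.comap p
            (Subgroup.map p (Subgroup.closure {z : K | ∃ t ∈ T, ∃ s ∈ S, z = ⁅t, s⁆})) :=
          Subgroup.mem_comap.mpr (hstep hpx)
        rwa [Subgroup.comap_map_eq, QuotientGroup.ker_mk'] at hmem

private lemma comm_hopf {B : Type*} [CommGroup B] [Group.FG B] (f : B →* B)
    (hf : Function.Surjective f) : Function.Injective f := by
  haveI : Module.Finite ℤ (Additive B) :=
    Module.Finite.iff_addGroup_fg.mpr inferInstance
  exact IsNoetherian.injective_of_surjective_endomorphism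
    ((MonoidHom.toAdditive f).toIntLinearMap) hf

private lemma hopf {K : Type*} [Group K] [Group.FG K] {n : ℕ}
    (hn : (⊤ : Subgroup K).lowerCentralSeries n = ⊥) (φ : K →* K) (hφ : Function.Surjective φ) :
    Function.Injective φ := by
  suffices h : ∀ j, φ.ker ≤ (⊤ : Subgroup K).lowerCentralSeries j by
    have hker : φ.ker = ⊥ := le_antisymm (hn ▸ h n) bot_le
    exact (MonoidHom.ker_eq_bot_iff φ).mp hker
  intro j
  induction j with
  | zero => exact le_top
  | succ j ih =>
    intro x hx
    set N := (⊤ : Subgroup K).lowerCentralSeries (j + 1) with hNdef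
    let p : K →* K ⧸ N := QuotientGroup.mk' N
    have hmap := lcs_map_surj φ hφ
    have hNle : N ≤ N.comap φ := Subgroup.map_le_iff_le_comap.mp (le_of_eq (hmap (j + 1)))
    let φbar : K ⧸ N →* K ⧸ N := QuotientGroup.map N N φ hNle
    have hpbar : ∀ y : K, φbar (p y) = p (φ y) := fun _ => rfl
    let B : Subgroup (K ⧸ N) := ((⊤ : Subgroup K).lowerCentralSeries j).map p
    have hcomm : ∀ a ∈ B, ∀ b ∈ B, a * b = b * a := by
      rintro _ ⟨y, hy, rfl⟩ _ ⟨z, hz, rfl⟩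
      apply commutatorElement_eq_one_iff_mul_comm.mp
      have hyz : ⁅y, z⁆ ∈ N := commutator_mem_commutator hy (mem_top z)
      show ⁅p y, p z⁆ = 1
      rw [← map_commutatorElement]
      exact (QuotientGroup.eq_one_iff _).mpr hyz
    letI : CommGroup B :=
      { (inferInstance : Group B) with
        mul_comm := fun a b => Subtype.ext (hcomm a a.2 b b.2) }
    obtain ⟨T, hTfin, hTsub, hT⟩ := fgsec K j
    have hB : B = Subgroup.closure (p '' T) := by
      show Subgroup.map p ((⊤ : Subgroup K).lowerCentralSeries j) = _
      rw [← hT, Subgroup.map_sup, MonoidHom.map_closure]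
      have : Subgroup.map p ((⊤ : Subgroup K).lowerCentralSeries (j + 1)) = ⊥ :=
        QuotientGroup.map_mk'_self (N := (⊤ : Subgroup K).lowerCentralSeries (j + 1))
      rw [this, sup_bot_eq]
    haveI hBFG : Group.FG B :=
      (Group.fg_iff_subgroup_fg B).mpr ((Subgroup.fg_iff B).mpr ⟨p '' T, hB.symm, hTfin.image p⟩)
    have hBeq : Subgroup.map φbar B = B := by
      show Subgroup.map φbar (Subgroup.map p ((⊤ : Subgroup K).lowerCentralSeries j)) = _
      rw [Subgroup.map_map]
      have hco : φbar.comp p = p.comp φ := MonoidHom.ext fun y => hpbar y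
      rw [hco, ← Subgroup.map_map, hmap j]
    have hBinv : ∀ a : B, φbar (a : K ⧸ N) ∈ B := fun a => by
      have h := Subgroup.mem_map_of_mem φbar a.2
      rwa [hBeq] at h
    let f : B →* B := (φbar.domRestrict B).codRestrict B hBinv
    have hfsurj : Function.Surjective f := by
      rintro ⟨b, hb⟩
      rw [← hBeq] at hb
      obtain ⟨a, ha, hab⟩ := hb
      exact ⟨⟨a, ha⟩, Subtype.ext hab⟩
    have hfinj := comm_hopf f hfsurj
    have hxj : x ∈ (⊤ : Subgroup K).lowerCentralSeries j := ih hx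
    have hpx : p x ∈ B := Subgroup.mem_map_of_mem p hxj
    have h1 : f ⟨p x, hpx⟩ = 1 := by
      apply Subtype.ext
      show φbar (p x) = 1
      rw [hpbar x, MonoidHom.mem_ker.mp hx, map_one]
    have h2 : (⟨p x, hpx⟩ : B) = 1 := hfinj (by rw [h1, map_one])
    have h3 : p x = 1 := congrArg Subtype.val h2
    exact (QuotientGroup.eq_one_iff x).mp h3

theorem stmt_5 {G H : Type*} [Group G] [Group H] [Group.FG G]
    (hres : ⨅ i : ℕ, (⊤ : Subgroup G).lowerCentralSeries i = ⊥)
    (ψ : G →* H) (hsurj : Function.Surjective ψ) (hker : ψ.ker ≠ ⊥)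
    (hiso : ∀ i : ℕ, Nonempty
      ((G ⧸ (⊤ : Subgroup G).lowerCentralSeries i) ≃* (H ⧸ (⊤ : Subgroup H).lowerCentralSeries i))) :
    False := by
  obtain ⟨x, hxker, hx1⟩ : ∃ x : G, x ∈ ψ.ker ∧ x ≠ 1 := by
    by_contra h
    push_neg at h
    apply hker
    rw [eq_bot_iff]
    intro y hy
    rw [Subgroup.mem_bot]
    exact h y hy
  obtain ⟨i, hxi⟩ : ∃ i, x ∉ (⊤ : Subgroup G).lowerCentralSeries i := by
    by_contra h
    push_neg at h
    have hmem := Subgroup.mem_iInf.mpr h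
    rw [hres] at hmem
    exact hx1 (Subgroup.mem_bot.mp hmem)
  let pG : G →* G ⧸ (⊤ : Subgroup G).lowerCentralSeries i := QuotientGroup.mk' _
  have hle : (⊤ : Subgroup G).lowerCentralSeries i ≤ ((⊤ : Subgroup H).lowerCentralSeries i).comap ψ :=
    Subgroup.map_le_iff_le_comap.mp (lowerCentralSeries.map ψ i)
  let ψbar := QuotientGroup.map ((⊤ : Subgroup G).lowerCentralSeries i) ((⊤ : Subgroup H).lowerCentralSeries i) ψ hle
  have hψbar : Function.Surjective ψbar := by
    intro q
    obtain ⟨h0, rfl⟩ := QuotientGroup.mk'_surjective _ q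
    obtain ⟨g, rfl⟩ := hsurj h0
    exact ⟨pG g, rfl⟩
  obtain ⟨e⟩ := hiso i
  let φ := e.symm.toMonoidHom.comp ψbar
  have hφs : Function.Surjective φ := e.symm.surjective.comp hψbar
  have hnil : (⊤ : Subgroup (G ⧸ (⊤ : Subgroup G).lowerCentralSeries i)).lowerCentralSeries i = ⊥ := by
    rw [← lcs_map_surj pG (QuotientGroup.mk'_surjective _) i]
    exact QuotientGroup.map_mk'_self (N := (⊤ : Subgroup G).lowerCentralSeries i)
  have hinj := hopf hnil φ hφs
  have h1 : φ (pG x) = 1 := by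
    show e.symm (ψbar (pG x)) = 1
    rw [show ψbar (pG x) = QuotientGroup.mk' ((⊤ : Subgroup H).lowerCentralSeries i) (ψ x) from rfl,
      MonoidHom.mem_ker.mp hxker]
    simp
  have h2 : pG x = 1 := hinj (by rw [h1, map_one])
  exact hxi ((QuotientGroup.eq_one_iff x).mp h2)
end

section
/- Let F₂ be the free group on generators a, b, and let β = [a,b] = aba⁻¹b⁻¹. If y ∈ F₂ and n ≥ 1 satisfy yⁿ = β, then n = 1. -/
open scoped commutatorElement

structure Heis (R : Type) where
  x : R
  y : R
  z : R

namespace Heis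

variable {R : Type} [CommRing R]

@[ext] lemma ext' {a b : Heis R} (hx : a.x = b.x) (hy : a.y = b.y) (hz : a.z = b.z) :
    a = b := by cases a; cases b; simp_all

instance : Mul (Heis R) := ⟨fun a b => ⟨a.x + b.x, a.y + b.y, a.z + b.z + a.x * b.y⟩⟩
instance : One (Heis R) := ⟨⟨0, 0, 0⟩⟩
instance : Inv (Heis R) := ⟨fun a => ⟨-a.x, -a.y, a.x * a.y - a.z⟩⟩

lemma mul_def (a b : Heis R) :
    a * b = ⟨a.x + b.x, a.y + b.y, a.z + b.z + a.x * b.y⟩ := rfl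

lemma inv_def (a : Heis R) : a⁻¹ = ⟨-a.x, -a.y, a.x * a.y - a.z⟩ := rfl

lemma one_def : (1 : Heis R) = ⟨0, 0, 0⟩ := rfl

instance : Group (Heis R) where
  mul_assoc a b c := by ext <;> simp [mul_def] <;> ring
  one_mul a := by ext <;> simp [mul_def, one_def]
  mul_one a := by ext <;> simp [mul_def, one_def]
  inv_mul_cancel a := by ext <;> simp [mul_def, inv_def, one_def] <;> ring

lemma pow_def (a : Heis R) (k : ℕ) :
    a ^ k = ⟨(k : R) * a.x, (k : R) * a.y, (k : R) * a.z + (k.choose 2 : R) * a.x * a.y⟩ := by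
  induction k with
  | zero => simp [one_def]
  | succ k ih =>
      rw [pow_succ, ih, mul_def]
      have hc : ((k+1).choose 2 : R) = (k.choose 2 : R) + (k : R) := by
        have : (k+1).choose 2 = k.choose 2 + k := by
          rw [Nat.choose_succ_succ, Nat.choose_one_right]; exact Nat.add_comm _ _
        rw [this]; push_cast; ring
      ext <;> simp [hc] <;> push_cast <;> ring

end Heis

theorem stmt_6 (y : FreeGroup (Fin 2)) (n : ℕ) (hn : 1 ≤ n)
    (h : y ^ n = ⁅FreeGroup.of (0 : Fin 2), FreeGroup.of (1 : Fin 2)⁆) :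
    n = 1 := by
  by_contra hne
  have hn2 : 2 ≤ n := by omega
  set p := n.minFac with hp
  have hpp : p.Prime := Nat.minFac_prime (by omega)
  have hdvd : p ∣ n := Nat.minFac_dvd n
  set R := ZMod (p ^ 2) with hR
  haveI : NeZero (p ^ 2) := ⟨Nat.pos_iff_ne_zero.mp (pow_pos hpp.pos 2)⟩
  let A : Heis R := ⟨1, 0, 0⟩
  let B : Heis R := ⟨0, 1, 0⟩
  let f : FreeGroup (Fin 2) →* Heis R := FreeGroup.lift ![A, B]
  have hfa : f (FreeGroup.of (0 : Fin 2)) = A := by simp [f]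
  have hfb : f (FreeGroup.of (1 : Fin 2)) = B := by simp [f]
  have hcomm : ⁅A, B⁆ = (⟨0, 0, 1⟩ : Heis R) := by
    show A * B * A⁻¹ * B⁻¹ = _
    simp [Heis.mul_def, Heis.inv_def, A, B]
  have hnp : n = n / p * p := (Nat.div_mul_cancel hdvd).symm
  have key : (f (y ^ (n / p))) ^ p = (⟨0, 0, 1⟩ : Heis R) := by
    rw [← map_pow, ← pow_mul, ← hnp, h, map_commutatorElement, hfa, hfb, hcomm]
  set g := f (y ^ (n / p)) with hg
  rw [Heis.pow_def] at key
  have h1 : (p : R) * g.x = 0 := congrArg Heis.x key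
  have h3 : (p : R) * g.z + (p.choose 2 : R) * g.x * g.y = 1 := congrArg Heis.z key
  have hmul := congrArg (fun t => (p : R) * t) h3
  simp only [mul_add, mul_one] at hmul
  have hsq : (p : R) * (p : R) = 0 := by
    have h0 : ((p ^ 2 : ℕ) : R) = 0 := by simp [hR]
    push_cast at h0
    linear_combination h0
  have hz0 : (p : R) = 0 := by
    linear_combination -hmul + g.z * hsq + (p.choose 2 : R) * g.y * h1
  have : (p ^ 2 : ℕ) ∣ p := (ZMod.natCast_eq_zero_iff p (p ^ 2)).mp hz0
  have hle := Nat.le_of_dvd hpp.pos this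
  nlinarith [hpp.two_le]
end

section
/- Let F₄ be the free group on a, b, c, d, let w = [a,b][c,d], and let F_{4,i} = F₄/γ_i(F₄). Then for every i, the normal closure of the image of w·[w, bwb⁻¹] in F_{4,i} equals the normal closure of the image of w in F_{4,i}. -/
section Aux

variable {G : Type*} [Group G]

/-- Lower central series of a surjective image. -/
lemma aux_lcs_le_map {H : Type*} [Group H] (f : G →* H) (hf : Function.Surjective f) (n : ℕ) :
    (⊤ : Subgroup H).lowerCentralSeries n ≤ Subgroup.map f ((⊤ : Subgroup G).lowerCentralSeries n) := by
  induction n with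
  | zero =>
      simp [Subgroup.lowerCentralSeries, ← MonoidHom.range_eq_map, f.range_eq_top_of_surjective hf]
  | succ n ih =>
      show ⁅(⊤ : Subgroup H).lowerCentralSeries n, (⊤ : Subgroup H)⁆ ≤ _
      calc ⁅(⊤ : Subgroup H).lowerCentralSeries n, (⊤ : Subgroup H)⁆
          ≤ ⁅Subgroup.map f ((⊤ : Subgroup G).lowerCentralSeries n), Subgroup.map f ⊤⁆ := by
            apply Subgroup.commutator_mono ih
            rw [← MonoidHom.range_eq_map, f.range_eq_top_of_surjective hf]
        _ = Subgroup.map f ⁅(⊤ : Subgroup G).lowerCentralSeries n, (⊤ : Subgroup G)⁆ :=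
            (Subgroup.map_commutator _ _ f).symm

/-- The quotient by a term of the lower central series is nilpotent. -/
lemma aux_nilpotent_quotient (i : ℕ) :
    Group.IsNilpotent (G ⧸ (⊤ : Subgroup G).lowerCentralSeries i) := by
  rw [nilpotent_iff_lowerCentralSeries]
  refine ⟨i, le_antisymm ?_ bot_le⟩
  refine le_trans (aux_lcs_le_map (QuotientGroup.mk' _) (QuotientGroup.mk_surjective) i) ?_
  exact le_of_eq ((Subgroup.map_eq_bot_iff _).mpr (le_of_eq (QuotientGroup.ker_mk' _).symm))

/-- A nilpotent group equal to its own commutator subgroup is trivial. -/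
lemma aux_trivial_of_commutator_eq_top [Group.IsNilpotent G]
    (h : commutator G = ⊤) : Subsingleton G := by
  have key : ∀ n, (⊤ : Subgroup G).lowerCentralSeries n = ⊤ := by
    intro n
    induction n with
    | zero => rfl
    | succ n ih =>
        show ⁅(⊤ : Subgroup G).lowerCentralSeries n, (⊤ : Subgroup G)⁆ = ⊤
        rw [ih, ← commutator_def, h]
  obtain ⟨n, hn⟩ := nilpotent_iff_lowerCentralSeries.mp ‹_›
  refine ⟨fun x y => ?_⟩
  have hx : x ∈ (⊤ : Subgroup G).lowerCentralSeries n := (key n).symm ▸ Subgroup.mem_top x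
  have hy : y ∈ (⊤ : Subgroup G).lowerCentralSeries n := (key n).symm ▸ Subgroup.mem_top y
  rw [hn, Subgroup.mem_bot] at hx hy
  rw [hx, hy]

/-- Frattini-type argument: in a nilpotent group, a normal subgroup that together with
the commutator subgroup generates the group is the whole group. -/
lemma aux_eq_top_of_sup_commutator [Group.IsNilpotent G] (H : Subgroup G) [H.Normal]
    (h : H ⊔ commutator G = ⊤) : H = ⊤ := by
  have hsurj : Function.Surjective (QuotientGroup.mk' H) := QuotientGroup.mk_surjective
  have hc : commutator (G ⧸ H) = ⊤ := by
    have h2 := congrArg (Subgroup.map (QuotientGroup.mk' H)) h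
    rw [Subgroup.map_sup] at h2
    rw [(Subgroup.map_eq_bot_iff _).mpr (le_of_eq (QuotientGroup.ker_mk' H).symm),
      bot_sup_eq] at h2
    rw [commutator_def, Subgroup.map_commutator, ← MonoidHom.range_eq_map,
      MonoidHom.range_eq_top_of_surjective _ hsurj, ← commutator_def] at h2
    exact h2
  have : Subsingleton (G ⧸ H) := aux_trivial_of_commutator_eq_top hc
  exact QuotientGroup.subgroup_eq_top_of_subsingleton H this

end Aux

open scoped commutatorElement in
theorem stmt_17 (i : ℕ) :
    let a : FreeGroup (Fin 4) := FreeGroup.of 0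
    let b : FreeGroup (Fin 4) := FreeGroup.of 1
    let c : FreeGroup (Fin 4) := FreeGroup.of 2
    let d : FreeGroup (Fin 4) := FreeGroup.of 3
    let w := ⁅a, b⁆ * ⁅c, d⁆
    Subgroup.normalClosure
        {(QuotientGroup.mk (w * ⁅w, b * w * b⁻¹⁆) :
          FreeGroup (Fin 4) ⧸ (⊤ : Subgroup (FreeGroup (Fin 4))).lowerCentralSeries i)} =
      Subgroup.normalClosure
        {(QuotientGroup.mk w :
          FreeGroup (Fin 4) ⧸ (⊤ : Subgroup (FreeGroup (Fin 4))).lowerCentralSeries i)} := by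
  intro a b c d w
  set Q := FreeGroup (Fin 4) ⧸ (⊤ : Subgroup (FreeGroup (Fin 4))).lowerCentralSeries i
  haveI : Group.IsNilpotent Q := aux_nilpotent_quotient i
  set W : Q := QuotientGroup.mk w with hW
  set B : Q := QuotientGroup.mk b with hB
  have hmk : (QuotientGroup.mk (w * ⁅w, b * w * b⁻¹⁆) : Q) = W * ⁅W, B * W * B⁻¹⁆ := by
    simp [hW, hB, commutatorElement_def, QuotientGroup.mk_mul, QuotientGroup.mk_inv]
    group
  rw [hmk]
  set N := Subgroup.normalClosure {W} with hN
  set M := Subgroup.normalClosure {W * ⁅W, B * W * B⁻¹⁆} with hM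
  have hWN : W ∈ N := Subgroup.subset_normalClosure rfl
  have hconjN : B * W * B⁻¹ ∈ N := Subgroup.Normal.conj_mem inferInstance W hWN B
  have hcommN : ⁅W, B * W * B⁻¹⁆ ∈ ⁅N, N⁆ :=
    Subgroup.commutator_mem_commutator hWN hconjN
  -- M ≤ N
  have hMN : M ≤ N := by
    apply Subgroup.normalClosure_le_normal
    intro x hx
    rw [Set.mem_singleton_iff] at hx
    subst hx
    exact N.mul_mem hWN (Subgroup.commutator_le_left N N hcommN)
  -- N = M ⊔ ⁅N, N⁆
  have hKnormal : (M ⊔ ⁅N, N⁆).Normal := Subgroup.sup_normal _ _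
  have hNK : N ≤ M ⊔ ⁅N, N⁆ := by
    apply Subgroup.normalClosure_le_normal
    intro x hx
    rw [Set.mem_singleton_iff] at hx
    subst hx
    have : W = (W * ⁅W, B * W * B⁻¹⁆) * ⁅W, B * W * B⁻¹⁆⁻¹ := by group
    rw [this]
    exact Subgroup.mul_mem _
      (Subgroup.mem_sup_left (Subgroup.subset_normalClosure rfl))
      (Subgroup.mem_sup_right (Subgroup.inv_mem _ hcommN))
  have hKeq : M ⊔ ⁅N, N⁆ = N := le_antisymm
    (sup_le hMN (Subgroup.commutator_le_left N N)) hNK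
  -- Apply the Frattini-type argument inside N
  have hsub : M.subgroupOf N ⊔ commutator N = ⊤ := by
    apply Subgroup.map_injective N.subtype_injective
    rw [Subgroup.map_sup, Subgroup.subgroupOf_map_subtype, commutator_def,
      Subgroup.map_commutator, ← MonoidHom.range_eq_map, N.range_subtype,
      inf_of_le_left hMN, hKeq]
  have := aux_eq_top_of_sup_commutator (M.subgroupOf N) hsub
  rw [Subgroup.subgroupOf_eq_top] at this
  exact le_antisymm hMN this
end
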